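/- Let Tⁿ be the flat n-torus, let p ∈ Tⁿ, and let q = p + (1/2, …, 1/2) be the antipodal point of p. Then there are exactly 2ⁿ distinct geodesics from p to q. -/

import Mathlib

/-- A geodesic in a metric space: a continuous path `γ : [0,1] → X` moving at
constant speed `c` and realizing distances, i.e. `d(γ s, γ t) = c·|s − t|`. -/
def IsGeodesic {X : Type*} [PseudoMetricSpace X] (γ : C(unitInterval, X)) : Prop :=
  ∃ c : ℝ, ∀ s t : unitInterval, dist (γ s) (γ t) = c * |(s : ℝ) - (t : ℝ)|

/-- A geodesic motion planning rule (GMPR) on `E ⊆ X × X`: a map, continuous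
on `E`, sending each pair `(x, y) ∈ E` to a geodesic from `x` to `y`. -/
def IsGMPROn {X : Type*} [PseudoMetricSpace X] (E : Set (X × X))
    (σ' : X × X → C(unitInterval, X)) : Prop :=
  ContinuousOn σ' E ∧ ∀ e ∈ E, IsGeodesic (σ' e) ∧ σ' e 0 = e.1 ∧ σ' e 1 = e.2

/-- The integer lattice `ℤⁿ` inside Euclidean space `ℝⁿ`. -/
noncomputable def intLattice (n : ℕ) : AddSubgroup (EuclideanSpace ℝ (Fin n)) where
  carrier := {x | ∀ i, ∃ m : ℤ, x i = m}
  zero_mem' := fun i => ⟨0, by simp⟩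
  add_mem' := by
    intro a b ha hb i
    obtain ⟨m, hm⟩ := ha i
    obtain ⟨l, hl⟩ := hb i
    exact ⟨m + l, by push_cast [PiLp.add_apply, hm, hl]; ring⟩
  neg_mem' := by
    intro a ha i
    obtain ⟨m, hm⟩ := ha i
    exact ⟨-m, by push_cast [PiLp.neg_apply, hm]; ring⟩

instance intLattice_isClosed (n : ℕ) :
    IsClosed ((intLattice n : AddSubgroup (EuclideanSpace ℝ (Fin n))) :
      Set (EuclideanSpace ℝ (Fin n))) := by
  have : ((intLattice n : AddSubgroup (EuclideanSpace ℝ (Fin n))) :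
      Set (EuclideanSpace ℝ (Fin n))) =
      ⋂ i, (fun x : EuclideanSpace ℝ (Fin n) => x i) ⁻¹'
        (Set.range ((↑) : ℤ → ℝ)) := by
    ext x
    simp [intLattice, Set.mem_iInter, eq_comm]
  rw [this]
  exact isClosed_iInter fun i =>
    Int.isClosedEmbedding_coe_real.isClosed_range.preimage
      (EuclideanSpace.proj i).continuous

/-- The flat `n`-torus `ℝⁿ/ℤⁿ`, equipped with the quotient metric induced by
the Euclidean metric on `ℝⁿ`. -/
abbrev FlatTorus (n : ℕ) := EuclideanSpace ℝ (Fin n) ⧸ intLattice n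


/-- The vector `(1/2, …, 1/2)` of `ℝⁿ`. -/
noncomputable def halfVec (n : ℕ) : EuclideanSpace ℝ (Fin n) :=
  (WithLp.equiv 2 (Fin n → ℝ)).symm fun _ => (1 : ℝ) / 2

namespace FT
open scoped BigOperators

variable {n : ℕ}

local notation "E" => EuclideanSpace ℝ (Fin n)
local notation "T" => FlatTorus n

lemma mem_intLattice {x : EuclideanSpace ℝ (Fin n)} :
    x ∈ intLattice n ↔ ∀ i, ∃ m : ℤ, x i = m := Iff.rfl

lemma round_min (r : ℝ) (m : ℤ) : |r - round r| ≤ |r - m| := by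
  rcases eq_or_ne m (round r) with h | h
  · rw [h]
  · have h1 : |r - round r| ≤ 1 / 2 := abs_sub_round r
    have h2 : (1 : ℝ) ≤ |(m : ℝ) - round r| := by
      have : (1 : ℤ) ≤ |m - round r| := Int.one_le_abs (sub_ne_zero.mpr h)
      calc (1:ℝ) = ((1:ℤ):ℝ) := by norm_num
        _ ≤ ((|m - round r| : ℤ) : ℝ) := by exact_mod_cast this
        _ = |(m:ℝ) - round r| := by rw [Int.cast_abs]; push_cast; ring_nf
    have h3 : |(m : ℝ) - round r| ≤ |r - m| + |r - round r| := by
      have := abs_sub (r - round r) (r - m)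
      calc |(m:ℝ) - round r| = |(r - round r) - (r - m)| := by ring_nf
        _ ≤ |r - round r| + |r - m| := abs_sub _ _
        _ = |r - m| + |r - round r| := by ring
    linarith

lemma small_round (r : ℝ) (h : |r| ≤ 1 / 2) (m : ℤ) : |r| ≤ |r - m| := by
  rcases eq_or_ne m 0 with rfl | hm
  · simp
  · have h2 : (1 : ℝ) ≤ |(m : ℝ)| := by exact_mod_cast Int.one_le_abs (by exact_mod_cast hm)
    have h3 : |(m : ℝ)| ≤ |r| + |r - m| := by
      calc |(m:ℝ)| = |r - (r - m)| := by ring_nf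
        _ ≤ |r| + |r - m| := abs_sub _ _
    linarith

lemma abs_sub_round_eq (r : ℝ) (h : |r| ≤ 1 / 2) : |r - round r| = |r| :=
  le_antisymm (by simpa using round_min r 0) (small_round r h (round r))

end FT
namespace FT

variable {n : ℕ}

lemma norm_le_coord {x y : EuclideanSpace ℝ (Fin n)} (h : ∀ i, |x i| ≤ |y i|) : ‖x‖ ≤ ‖y‖ := by
  rw [EuclideanSpace.norm_eq, EuclideanSpace.norm_eq]
  apply Real.sqrt_le_sqrt
  apply Finset.sum_le_sum
  intro i _
  rw [Real.norm_eq_abs, Real.norm_eq_abs]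
  exact pow_le_pow_left₀ (abs_nonneg _) (h i) 2

lemma norm_lt_coord {x y : EuclideanSpace ℝ (Fin n)} (h : ∀ i, |x i| ≤ |y i|)
    (i0 : Fin n) (h0 : |x i0| < |y i0|) : ‖x‖ < ‖y‖ := by
  rw [EuclideanSpace.norm_eq, EuclideanSpace.norm_eq]
  apply Real.sqrt_lt_sqrt
  · exact Finset.sum_nonneg fun i _ => by positivity
  · apply Finset.sum_lt_sum (fun i _ => by
      rw [Real.norm_eq_abs, Real.norm_eq_abs]
      exact pow_le_pow_left₀ (abs_nonneg _) (h i) 2)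
    exact ⟨i0, Finset.mem_univ _, by
      rw [Real.norm_eq_abs, Real.norm_eq_abs]
      exact pow_lt_pow_left₀ h0 (abs_nonneg _) (by norm_num)⟩

noncomputable def roundVec (x : EuclideanSpace ℝ (Fin n)) : EuclideanSpace ℝ (Fin n) :=
  (WithLp.equiv 2 (Fin n → ℝ)).symm fun i => ((round (x i) : ℤ) : ℝ)

@[simp] lemma roundVec_apply (x : EuclideanSpace ℝ (Fin n)) (i : Fin n) :
    roundVec x i = ((round (x i) : ℤ) : ℝ) := rfl

lemma roundVec_mem (x : EuclideanSpace ℝ (Fin n)) : roundVec x ∈ intLattice n :=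
  fun i => ⟨round (x i), rfl⟩

@[simp] lemma halfVec_apply (i : Fin n) : halfVec n i = 1 / 2 := rfl

/-- Members of the same coset differ coordinatewise by integers. -/
lemma coset_coord {x y : EuclideanSpace ℝ (Fin n)}
    (h : (y : FlatTorus n) = (x : FlatTorus n)) (i : Fin n) :
    ∃ m : ℤ, y i = x i + m := by
  rw [QuotientAddGroup.eq] at h
  obtain ⟨m, hm⟩ := h i
  have : -(y i) + x i = (m : ℝ) := by
    have := hm
    simpa [PiLp.add_apply, PiLp.neg_apply] using this
  exact ⟨-m, by push_cast; linarith⟩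

lemma norm_sub_roundVec_le {x y : EuclideanSpace ℝ (Fin n)}
    (h : (y : FlatTorus n) = (x : FlatTorus n)) : ‖x - roundVec x‖ ≤ ‖y‖ := by
  apply norm_le_coord
  intro i
  obtain ⟨m, hm⟩ := coset_coord h i
  have : (x - roundVec x) i = x i - round (x i) := by
    simp [PiLp.sub_apply]
  rw [this]
  have : y i = x i - (-m : ℤ) := by push_cast; rw [hm]; ring
  rw [this]
  exact round_min (x i) (-m)

lemma norm_mk (x : EuclideanSpace ℝ (Fin n)) :
    ‖(x : FlatTorus n)‖ = ‖x - roundVec x‖ := by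
  refine le_antisymm ?_ ?_
  · have he : ((x - roundVec x : EuclideanSpace ℝ (Fin n)) : FlatTorus n) = (x : FlatTorus n) := by
      rw [QuotientAddGroup.eq]
      have : -(x - roundVec x) + x = roundVec x := by abel
      rw [this]
      exact roundVec_mem x
    rw [← he]
    exact QuotientAddGroup.norm_mk_le_norm
  · refine le_of_forall_pos_le_add fun ε hε => ?_
    obtain ⟨m, hm, hm'⟩ := QuotientAddGroup.exists_norm_mk_lt (x : FlatTorus n) hε
    exact le_trans (norm_sub_roundVec_le (by simpa using hm)) hm'.le

lemma exists_min_rep (a : FlatTorus n) :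
    ∃ z : EuclideanSpace ℝ (Fin n), (z : FlatTorus n) = a ∧ ‖z‖ = ‖a‖ := by
  obtain ⟨x, rfl⟩ := QuotientAddGroup.mk_surjective a
  refine ⟨x - roundVec x, ?_, ?_⟩
  · rw [QuotientAddGroup.eq]
    have : -(x - roundVec x) + x = roundVec x := by abel
    rw [this]; exact roundVec_mem x
  · rw [norm_mk]

lemma norm_mk_small {x : EuclideanSpace ℝ (Fin n)} (h : ∀ i, |x i| ≤ 1 / 2) :
    ‖(x : FlatTorus n)‖ = ‖x‖ := by
  refine le_antisymm (QuotientAddGroup.norm_mk_le_norm) ?_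
  rw [norm_mk]
  apply norm_le_coord
  intro i
  have : (x - roundVec x) i = x i - round (x i) := by simp [PiLp.sub_apply]
  rw [this, abs_sub_round_eq (x i) (h i)]

/-- uniqueness of small representatives -/
lemma rep_eq_of_small {x y : EuclideanSpace ℝ (Fin n)} (h : ∀ i, |x i| < 1 / 2)
    (hy : (y : FlatTorus n) = (x : FlatTorus n)) (hn : ‖y‖ ≤ ‖x‖) : y = x := by
  by_contra hne
  have hco : ∀ i, ∃ m : ℤ, y i = x i + m := coset_coord hy
  have hle : ∀ i, |x i| ≤ |y i| := by
    intro i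
    obtain ⟨m, hm⟩ := hco i
    rcases eq_or_ne m 0 with rfl | hm0
    · simp [hm]
    · have h2 : (1 : ℝ) ≤ |(m : ℝ)| := by exact_mod_cast Int.one_le_abs hm0
      have h3 : |(m : ℝ)| ≤ |x i| + |y i| := by
        have h4 : |y i - x i| ≤ |y i| + |x i| := abs_sub _ _
        have h5 : |(m:ℝ)| = |y i - x i| := by rw [hm]; ring_nf
        linarith
      have := h i
      linarith
  obtain ⟨i0, hi0⟩ : ∃ i, y i ≠ x i := by
    by_contra hall
    push_neg at hall
    exact hne (by ext i; exact hall i)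
  have hstrict : |x i0| < |y i0| := by
    obtain ⟨m, hm⟩ := hco i0
    have hm0 : m ≠ 0 := by rintro rfl; simp at hm; exact hi0 hm
    have h2 : (1 : ℝ) ≤ |(m : ℝ)| := by exact_mod_cast Int.one_le_abs hm0
    have h3 : |(m : ℝ)| ≤ |x i0| + |y i0| := by
      have h4 : |y i0 - x i0| ≤ |y i0| + |x i0| := abs_sub _ _
      have h5 : |(m:ℝ)| = |y i0 - x i0| := by rw [hm]; ring_nf
      linarith
    have := h i0
    linarith
  exact absurd hn (not_le.mpr (norm_lt_coord hle i0 hstrict))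

end FT
namespace FT

variable {n : ℕ}

lemma eq_of_norm_add_eq {z w : EuclideanSpace ℝ (Fin n)}
    (h : ‖z + w‖ = ‖z‖ + ‖w‖) (h2 : ‖z‖ = ‖w‖) : z = w := by
  have ha := norm_add_sq_real z w
  have hb := norm_sub_sq_real z w
  have hz : ‖z - w‖ ^ 2 = 0 := by nlinarith [norm_nonneg (z + w), norm_nonneg z, norm_nonneg w]
  have : ‖z - w‖ = 0 := by
    have := norm_nonneg (z - w); nlinarith
  exact sub_eq_zero.mp (norm_eq_zero.mp this)

lemma norm_of_abs_half {v : EuclideanSpace ℝ (Fin n)} (hv : ∀ i, |v i| = 1 / 2) :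
    ‖v‖ = Real.sqrt n / 2 := by
  rw [EuclideanSpace.norm_eq]
  have : ∀ i, ‖v i‖ ^ 2 = 1 / 4 := by
    intro i
    rw [Real.norm_eq_abs, hv i]; norm_num
  rw [Finset.sum_congr rfl fun i _ => this i, Finset.sum_const, Finset.card_univ,
    Fintype.card_fin, nsmul_eq_mul]
  rw [show ((n : ℝ) * (1 / 4)) = n * (1 / 2) ^ 2 by norm_num,
    Real.sqrt_mul (Nat.cast_nonneg n), Real.sqrt_sq (by norm_num : (0:ℝ) ≤ 1/2)]
  ring

lemma smul_small {v : EuclideanSpace ℝ (Fin n)} (hv : ∀ i, |v i| = 1 / 2) {s : ℝ}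
    (hs : |s| ≤ 1) (i : Fin n) : |(s • v) i| ≤ 1 / 2 := by
  have : (s • v) i = s * v i := rfl
  rw [this, abs_mul, hv i]
  nlinarith

lemma norm_mk_smul {v : EuclideanSpace ℝ (Fin n)} (hv : ∀ i, |v i| = 1 / 2) {s : ℝ}
    (hs : |s| ≤ 1) : ‖((s • v : EuclideanSpace ℝ (Fin n)) : FlatTorus n)‖
      = Real.sqrt n / 2 * |s| := by
  rw [norm_mk_small (smul_small hv hs), norm_smul, norm_of_abs_half hv, Real.norm_eq_abs]
  ring

lemma mk_lipschitz : LipschitzWith 1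
    (fun x : EuclideanSpace ℝ (Fin n) => (x : FlatTorus n)) := by
  apply LipschitzWith.mk_one
  intro a b
  rw [dist_eq_norm, dist_eq_norm, ← QuotientAddGroup.mk_sub]
  exact QuotientAddGroup.norm_mk_le_norm

lemma dist_gen (p : FlatTorus n) (a b : EuclideanSpace ℝ (Fin n)) :
    dist (p + (a : FlatTorus n)) (p + (b : FlatTorus n))
      = ‖((a - b : EuclideanSpace ℝ (Fin n)) : FlatTorus n)‖ := by
  rw [dist_eq_norm, QuotientAddGroup.mk_sub]
  abel_nf

lemma gpath_dist {v : EuclideanSpace ℝ (Fin n)} (hv : ∀ i, |v i| = 1 / 2) (p : FlatTorus n)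
    (s t : ℝ) (hs : |s - t| ≤ 1) :
    dist (p + ((s • v : EuclideanSpace ℝ (Fin n)) : FlatTorus n))
      (p + ((t • v : EuclideanSpace ℝ (Fin n)) : FlatTorus n))
      = Real.sqrt n / 2 * |s - t| := by
  rw [dist_gen, show (s • v - t • v : EuclideanSpace ℝ (Fin n)) = (s - t) • v from
    (sub_smul s t v).symm, norm_mk_smul hv hs]

noncomputable def sgnVec (n : ℕ) (ε : Fin n → Bool) : EuclideanSpace ℝ (Fin n) :=
  (WithLp.equiv 2 (Fin n → ℝ)).symm fun i => if ε i then (1 / 2 : ℝ) else -(1 / 2)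

@[simp] lemma sgnVec_apply (ε : Fin n → Bool) (i : Fin n) :
    sgnVec n ε i = if ε i then (1 / 2 : ℝ) else -(1 / 2) := rfl

lemma sgnVec_abs (ε : Fin n → Bool) (i : Fin n) : |sgnVec n ε i| = 1 / 2 := by
  rcases Bool.eq_false_or_eq_true (ε i) with h | h <;> simp [h]

lemma sgnVec_inj : Function.Injective (sgnVec n) := by
  intro a b hab
  funext i
  have : sgnVec n a i = sgnVec n b i := by rw [hab]
  rcases Bool.eq_false_or_eq_true (a i) with ha | ha <;>
    rcases Bool.eq_false_or_eq_true (b i) with hb | hb <;>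
      simp [ha, hb] at this ⊢ <;> norm_num at this

/-- the straight geodesic from `p` in direction `v` -/
noncomputable def gpath (p : FlatTorus n) (v : EuclideanSpace ℝ (Fin n)) :
    C(unitInterval, FlatTorus n) :=
  ⟨fun t => p + (((t : ℝ) • v : EuclideanSpace ℝ (Fin n)) : FlatTorus n), by
    exact continuous_const.add (mk_lipschitz.continuous.comp
      (continuous_subtype_val.smul continuous_const))⟩

@[simp] lemma gpath_apply (p : FlatTorus n) (v : EuclideanSpace ℝ (Fin n)) (t : unitInterval) :
    gpath p v t = p + (((t : ℝ) • v : EuclideanSpace ℝ (Fin n)) : FlatTorus n) := rfl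

end FT
namespace FT

variable {n : ℕ}

lemma abs_half : |(1 / 2 : ℝ)| = 1 / 2 := by rw [abs_of_pos] <;> norm_num

lemma mk_sgn_eq_half (ε : Fin n → Bool) :
    ((sgnVec n ε : EuclideanSpace ℝ (Fin n)) : FlatTorus n)
      = ((halfVec n : EuclideanSpace ℝ (Fin n)) : FlatTorus n) := by
  rw [QuotientAddGroup.eq]
  intro i
  refine ⟨if ε i then 0 else 1, ?_⟩
  have : (-(sgnVec n ε) + halfVec n) i = -(sgnVec n ε i) + halfVec n i := rfl
  rw [this, sgnVec_apply, halfVec_apply]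
  rcases Bool.eq_false_or_eq_true (ε i) with h | h <;> simp [h] <;> norm_num

lemma norm_mk_half : ‖((halfVec n : EuclideanSpace ℝ (Fin n)) : FlatTorus n)‖
    = Real.sqrt n / 2 := by
  rw [norm_mk_small (fun i => by rw [halfVec_apply, abs_half])]
  exact norm_of_abs_half fun i => by rw [halfVec_apply, abs_half]

lemma half_rep_abs {u : EuclideanSpace ℝ (Fin n)}
    (hu : (u : FlatTorus n) = ((halfVec n : EuclideanSpace ℝ (Fin n)) : FlatTorus n))
    (hn : ‖u‖ = Real.sqrt n / 2) : ∀ i, |u i| = 1 / 2 := by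
  have hge : ∀ i, 1 / 2 ≤ |u i| := by
    intro i
    obtain ⟨m, hm⟩ := coset_coord hu i
    rw [halfVec_apply] at hm
    rcases eq_or_ne m 0 with rfl | hm0
    · rw [hm]; push_cast; rw [add_zero, abs_half]
    · have h2 : (1 : ℝ) ≤ |(m : ℝ)| := by exact_mod_cast Int.one_le_abs hm0
      have : |(m : ℝ)| ≤ |u i| + 1 / 2 := by
        have h4 : |(m : ℝ)| = |u i - 1 / 2| := by rw [hm]; ring_nf
        have h5 : |u i - 1 / 2| ≤ |u i| + |(1:ℝ)/2| := abs_sub _ _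
        rw [h4]
        calc |u i - 1/2| ≤ |u i| + |(1:ℝ)/2| := h5
          _ = |u i| + 1/2 := by norm_num
      linarith
  intro i
  refine le_antisymm ?_ (hge i)
  by_contra hlt
  push_neg at hlt
  have hle : ∀ j, |halfVec n j| ≤ |u j| := fun j => by
    rw [halfVec_apply, abs_half]; exact hge j
  have : ‖(halfVec n : EuclideanSpace ℝ (Fin n))‖ < ‖u‖ :=
    norm_lt_coord hle i (by rw [halfVec_apply, abs_half]; exact hlt)
  rw [hn, norm_of_abs_half (fun j => by rw [halfVec_apply]; norm_num)] at this
  exact lt_irrefl _ this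

lemma unit_abs_sub_le (s t : unitInterval) : |(s : ℝ) - (t : ℝ)| ≤ 1 := by
  have hs0 := s.2.1; have hs1 := s.2.2; have ht0 := t.2.1; have ht1 := t.2.2
  rw [abs_le]; constructor <;> linarith

lemma gpath_mem (p : FlatTorus n) (ε : Fin n → Bool) :
    IsGeodesic (gpath p (sgnVec n ε)) ∧ gpath p (sgnVec n ε) 0 = p ∧
      gpath p (sgnVec n ε) 1
        = p + (QuotientAddGroup.mk (halfVec n) : FlatTorus n) := by
  refine ⟨⟨Real.sqrt n / 2, fun s t => ?_⟩, ?_, ?_⟩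
  · rw [gpath_apply, gpath_apply]
    exact gpath_dist (sgnVec_abs ε) p s t (unit_abs_sub_le s t)
  · rw [gpath_apply]
    norm_num
  · rw [gpath_apply]
    have : ((1 : unitInterval) : ℝ) = 1 := rfl
    rw [this, one_smul, mk_sgn_eq_half]

lemma gpath_inj (p : FlatTorus n) :
    Function.Injective fun ε => gpath p (sgnVec n ε) := by
  intro a b hab
  have hab' : gpath p (sgnVec n a) = gpath p (sgnVec n b) := hab
  have h2 : gpath p (sgnVec n a) ⟨1/2, by norm_num⟩
      = gpath p (sgnVec n b) ⟨1/2, by norm_num⟩ := by rw [hab']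
  rw [gpath_apply, gpath_apply] at h2
  have hco : ((⟨1/2, by norm_num⟩ : unitInterval) : ℝ) = 1/2 := rfl
  rw [hco] at h2
  have h3 : ((((1:ℝ)/2) • sgnVec n a : EuclideanSpace ℝ (Fin n)) : FlatTorus n)
      = ((((1:ℝ)/2) • sgnVec n b : EuclideanSpace ℝ (Fin n)) : FlatTorus n) :=
    add_left_cancel h2
  have hsmall : ∀ i, |(((1:ℝ)/2) • sgnVec n b) i| < 1 / 2 := by
    intro i
    have h4 : (((1:ℝ)/2) • sgnVec n b) i = (1/2) * sgnVec n b i := rfl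
    rw [h4, abs_mul, sgnVec_abs, abs_half]
    norm_num
  have hnorm : ‖((1:ℝ)/2) • sgnVec n a‖ ≤ ‖((1:ℝ)/2) • sgnVec n b‖ := by
    rw [norm_smul, norm_smul, norm_of_abs_half (sgnVec_abs a), norm_of_abs_half (sgnVec_abs b)]
  have h5 := rep_eq_of_small hsmall h3 hnorm
  have hv : sgnVec n a = sgnVec n b :=
    smul_right_injective (EuclideanSpace ℝ (Fin n)) (by norm_num : ((1:ℝ)/2) ≠ 0) h5
  exact sgnVec_inj hv

end FT
namespace FT

variable {n : ℕ}

lemma mk_smul_add (u : EuclideanSpace ℝ (Fin n)) (a b : ℝ) :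
    (((a + b) • u : EuclideanSpace ℝ (Fin n)) : FlatTorus n)
      = ((a • u : EuclideanSpace ℝ (Fin n)) : FlatTorus n)
        + ((b • u : EuclideanSpace ℝ (Fin n)) : FlatTorus n) := by
  rw [add_smul, QuotientAddGroup.mk_add]

lemma double_smul_eq {z v : EuclideanSpace ℝ (Fin n)} {L : ℝ} (h : z + z = L • v) :
    z = (L / 2) • v := by
  have h2 : (2:ℝ) • z = (2:ℝ) • ((L / 2) • v) := by
    rw [two_smul, h, smul_smul]
    norm_num
    rw [show (2:ℝ) * (L / 2) = L by ring]
  exact smul_right_injective (EuclideanSpace ℝ (Fin n)) (two_ne_zero : (2:ℝ) ≠ 0) h2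

/-- The first-subdivision lemma: any metric midpoint of `a` and its antipode
`a + π(halfVec)` has the form `a + π((1/2)•v)` for a sign vector `v`. -/
lemma key_first {a m : FlatTorus n}
    (h1 : dist a m = Real.sqrt n / 2 * (1 / 2))
    (h2 : dist m (a + ((halfVec n : EuclideanSpace ℝ (Fin n)) : FlatTorus n))
      = Real.sqrt n / 2 * (1 / 2)) :
    ∃ v : EuclideanSpace ℝ (Fin n), (∀ i, |v i| = 1 / 2) ∧
      ((v : FlatTorus n) = ((halfVec n : EuclideanSpace ℝ (Fin n)) : FlatTorus n)) ∧
      m = a + (((1 / 2 : ℝ) • v : EuclideanSpace ℝ (Fin n)) : FlatTorus n) := by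
  set δ := Real.sqrt n / 2 with hδ
  have hδ0 : 0 ≤ δ := by positivity
  obtain ⟨z, hz, hzn⟩ := exists_min_rep (m - a)
  obtain ⟨w, hw, hwn⟩ := exists_min_rep
    ((a + ((halfVec n : EuclideanSpace ℝ (Fin n)) : FlatTorus n)) - m)
  have hzn' : ‖z‖ = δ * (1 / 2) := by
    rw [hzn, ← dist_eq_norm, dist_comm]; exact h1
  have hwn' : ‖w‖ = δ * (1 / 2) := by
    rw [hwn, ← dist_eq_norm, dist_comm]; exact h2
  have hmk : ((z + w : EuclideanSpace ℝ (Fin n)) : FlatTorus n)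
      = ((halfVec n : EuclideanSpace ℝ (Fin n)) : FlatTorus n) := by
    rw [QuotientAddGroup.mk_add, hz, hw]; abel
  have hge : δ ≤ ‖z + w‖ := by
    have := QuotientAddGroup.norm_mk_le_norm (S := intLattice n) (m := z + w)
    rw [hmk, norm_mk_half] at this; exact this
  have hle : ‖z + w‖ ≤ δ := by
    calc ‖z + w‖ ≤ ‖z‖ + ‖w‖ := norm_add_le _ _
      _ = δ := by rw [hzn', hwn']; ring
  have hzw : ‖z + w‖ = ‖z‖ + ‖w‖ := by
    rw [hzn', hwn', le_antisymm hle hge]; ring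
  have hzwe : z = w := eq_of_norm_add_eq hzw (hzn'.trans hwn'.symm)
  have habs : ∀ i, |(z + w) i| = 1 / 2 :=
    half_rep_abs hmk (le_antisymm hle hge)
  refine ⟨z + w, habs, hmk, ?_⟩
  have hz2 : z = ((1 : ℝ) / 2) • (z + w) := by
    apply double_smul_eq
    rw [one_smul, ← hzwe]
  rw [← hz2, hz]
  abel

/-- The midpoint-uniqueness lemma used in the dyadic induction. -/
lemma key_mid {v : EuclideanSpace ℝ (Fin n)} (hv : ∀ i, |v i| = 1 / 2)
    {a m : FlatTorus n} {L : ℝ} (hL : 0 < L) (hL2 : L < 1)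
    (h1 : dist a m = Real.sqrt n / 2 * (L / 2))
    (h2 : dist m (a + ((L • v : EuclideanSpace ℝ (Fin n)) : FlatTorus n))
      = Real.sqrt n / 2 * (L / 2)) :
    m = a + (((L / 2) • v : EuclideanSpace ℝ (Fin n)) : FlatTorus n) := by
  set δ := Real.sqrt n / 2 with hδ
  have hδ0 : 0 ≤ δ := by positivity
  have hLabs : |L| = L := abs_of_pos hL
  obtain ⟨z, hz, hzn⟩ := exists_min_rep (m - a)
  obtain ⟨w, hw, hwn⟩ := exists_min_rep
    ((a + ((L • v : EuclideanSpace ℝ (Fin n)) : FlatTorus n)) - m)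
  have hzn' : ‖z‖ = δ * (L / 2) := by
    rw [hzn, ← dist_eq_norm, dist_comm]; exact h1
  have hwn' : ‖w‖ = δ * (L / 2) := by
    rw [hwn, ← dist_eq_norm, dist_comm]; exact h2
  have hmk : ((z + w : EuclideanSpace ℝ (Fin n)) : FlatTorus n)
      = ((L • v : EuclideanSpace ℝ (Fin n)) : FlatTorus n) := by
    rw [QuotientAddGroup.mk_add, hz, hw]; abel
  have hnLv : ‖((L • v : EuclideanSpace ℝ (Fin n)) : FlatTorus n)‖ = δ * L := by
    rw [norm_mk_smul hv (by rw [hLabs]; exact hL2.le), hLabs]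
  have hge : δ * L ≤ ‖z + w‖ := by
    have := QuotientAddGroup.norm_mk_le_norm (S := intLattice n) (m := z + w)
    rw [hmk, hnLv] at this; exact this
  have hle : ‖z + w‖ ≤ δ * L := by
    calc ‖z + w‖ ≤ ‖z‖ + ‖w‖ := norm_add_le _ _
      _ = δ * L := by rw [hzn', hwn']; ring
  have hzw : ‖z + w‖ = ‖z‖ + ‖w‖ := by
    rw [hzn', hwn', le_antisymm hle hge]; ring
  have hzwe : z = w := eq_of_norm_add_eq hzw (hzn'.trans hwn'.symm)
  have hsmall : ∀ i, |(L • v) i| < 1 / 2 := by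
    intro i
    have h4 : (L • v) i = L * v i := rfl
    rw [h4, abs_mul, hv i, hLabs]
    nlinarith
  have hnle : ‖z + w‖ ≤ ‖L • v‖ := by
    rw [norm_smul, norm_of_abs_half hv, Real.norm_eq_abs, hLabs, le_antisymm hle hge]
    ring_nf
    exact le_of_eq (by rw [hδ]; ring)
  have hzweq : z + w = L • v := rep_eq_of_small hsmall hmk hnle
  have hz2 : z = (L / 2) • v := double_smul_eq (by rw [← hzwe] at hzweq; exact hzweq)
  rw [← hz2, hz]
  abel

end FT
namespace FT

variable {n : ℕ}

lemma surj {p : FlatTorus n} {γ : C(unitInterval, FlatTorus n)}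
    (hg : IsGeodesic γ) (h0 : γ 0 = p)
    (h1 : γ 1 = p + (QuotientAddGroup.mk (halfVec n) : FlatTorus n)) :
    ∃ ε : Fin n → Bool, γ = gpath p (sgnVec n ε) := by
  obtain ⟨c, hc⟩ := hg
  set δ := Real.sqrt n / 2 with hδdef
  have hδ0 : 0 ≤ δ := by positivity
  have hone : ((1 : unitInterval) : ℝ) = 1 := rfl
  have hzero : ((0 : unitInterval) : ℝ) = 0 := rfl
  -- the speed is `√n / 2`
  have hcδ : c = δ := by
    have h := hc 1 0
    rw [h0, h1, hone, hzero] at h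
    have h2 : dist (p + (QuotientAddGroup.mk (halfVec n) : FlatTorus n)) p = δ := by
      rw [dist_eq_norm, add_sub_cancel_left]
      exact norm_mk_half
    rw [h2] at h
    rw [h]
    norm_num
  set th : unitInterval := ⟨1/2, by norm_num⟩ with hth
  have hth_coe : ((th : unitInterval) : ℝ) = 1/2 := rfl
  have h1' : dist p (γ th) = δ * (1 / 2) := by
    have h := hc 0 th
    rw [h0, hzero, hth_coe, hcδ] at h
    rw [h]
    norm_num
  have h2' : dist (γ th) (p + (QuotientAddGroup.mk (halfVec n) : FlatTorus n))
      = δ * (1 / 2) := by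
    have h := hc th 1
    rw [h1, hone, hth_coe, hcδ] at h
    rw [h]
    norm_num
  obtain ⟨u, hu_abs, hu_half, hmid⟩ := key_first h1' h2'
  -- dyadic induction
  have main : ∀ j k : ℕ, k ≤ 2^(j+1) → ∀ t : unitInterval, (t:ℝ) = (k : ℝ) / 2^(j+1) →
      γ t = p + (((t:ℝ) • u : EuclideanSpace ℝ (Fin n)) : FlatTorus n) := by
    intro j
    induction j with
    | zero =>
      intro k hk t ht
      norm_num at hk
      interval_cases k
      · have ht0 : (t:ℝ) = 0 := by rw [ht]; norm_num
        have ht' : t = 0 := Subtype.ext ht0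
        rw [ht', h0, hzero, zero_smul, QuotientAddGroup.mk_zero, add_zero]
      · have ht0 : (t:ℝ) = 1/2 := by rw [ht]; norm_num
        have ht' : t = th := Subtype.ext ht0
        rw [ht', hth_coe]
        exact hmid
      · have ht0 : (t:ℝ) = 1 := by rw [ht]; norm_num
        have ht' : t = 1 := Subtype.ext ht0
        rw [ht', h1, hone, one_smul, hu_half]
    | succ j ih =>
      intro k hk t ht
      have hp2 : (2:ℕ)^(j+1+1) = 2 * 2^(j+1) := by ring
      have hp2r : (2:ℝ)^(j+1+1) = 2 * 2^(j+1) := by ring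
      rcases Nat.even_or_odd k with ⟨k', hk'⟩ | ⟨k', hk'⟩
      · subst hk'
        apply ih k' (by omega) t
        rw [ht]
        push_cast
        rw [hp2r]
        field_simp
        ring
      · subst hk'
        have hk'' : k' + 1 ≤ 2^(j+1) := by omega
        have hk2r : ((2:ℝ))^(j+1) ≠ 0 := by positivity
        have hk2r' : (0:ℝ) < (2:ℝ)^(j+1) := by positivity
        have hk2r'' : (0:ℝ) < (2:ℝ)^(j+1+1) := by positivity
        have hcast : ((k':ℝ) + 1) ≤ (2:ℝ)^(j+1) := by
          have := hk''
          push_cast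
          exact_mod_cast this
        have hS0 : (0:ℝ) ≤ (k':ℝ) / 2^(j+1) := by positivity
        have hS1 : (k':ℝ) / 2^(j+1) ≤ 1 := by
          rw [div_le_one hk2r']
          linarith
        set S : unitInterval := ⟨(k':ℝ) / 2^(j+1), hS0, hS1⟩ with hSdef
        have hScoe : ((S : unitInterval) : ℝ) = (k':ℝ) / 2^(j+1) := rfl
        have hT0 : (0:ℝ) ≤ ((k':ℝ) + 1) / 2^(j+1) := by positivity
        have hT1 : ((k':ℝ) + 1) / 2^(j+1) ≤ 1 := by
          rw [div_le_one hk2r']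
          linarith
        set T' : unitInterval := ⟨((k':ℝ) + 1) / 2^(j+1), hT0, hT1⟩ with hTdef
        have hTcoe : ((T' : unitInterval) : ℝ) = ((k':ℝ) + 1) / 2^(j+1) := rfl
        have hS := ih k' (by omega) S hScoe
        have hT := ih (k'+1) hk'' T' (by rw [hTcoe]; push_cast; ring)
        set L : ℝ := 1 / 2^(j+1) with hLdef
        have hL : 0 < L := by positivity
        have hL2 : L < 1 := by
          rw [hLdef, div_lt_one hk2r']
          have : (2:ℝ)^1 ≤ (2:ℝ)^(j+1) := by
            apply pow_le_pow_right₀ (by norm_num)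
            omega
          simpa using lt_of_lt_of_le (by norm_num : (1:ℝ) < 2^1) this
        -- γ T' = γ S + mk (L • u)
        have hTS : γ T' = γ S + ((L • u : EuclideanSpace ℝ (Fin n)) : FlatTorus n) := by
          rw [hS, hT, hScoe, hTcoe, add_assoc, ← mk_smul_add]
          congr 2
          rw [hLdef]
          ring
        -- distances
        have htval : (t:ℝ) = ((k':ℝ) / 2^(j+1)) + L / 2 := by
          rw [ht, hLdef]
          push_cast
          rw [hp2r]
          field_simp
        have hd1 : dist (γ S) (γ t) = δ * (L / 2) := by
          have h := hc S t
          rw [hcδ, hScoe, htval] at h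
          rw [h]
          rw [show ((k':ℝ) / 2^(j+1)) - ((k':ℝ) / 2^(j+1) + L / 2) = -(L/2) by ring, abs_neg,
            abs_of_pos (by positivity)]
        have hd2 : dist (γ t) (γ T') = δ * (L / 2) := by
          have h := hc t T'
          rw [hcδ, hTcoe, htval] at h
          rw [h]
          rw [show ((k':ℝ) / 2^(j+1) + L / 2) - (((k':ℝ) + 1) / 2^(j+1)) = L/2 - L by
              rw [hLdef]; field_simp; ring,
            show (L/2 - L : ℝ) = -(L/2) by ring, abs_neg, abs_of_pos (by positivity)]
        have hkey := key_mid hu_abs hL hL2 hd1 (by rw [← hTS]; exact hd2)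
        rw [hkey, hS, hScoe, add_assoc, ← mk_smul_add, htval]
  -- pass to the limit
  have final : ∀ t : unitInterval,
      γ t = p + (((t:ℝ) • u : EuclideanSpace ℝ (Fin n)) : FlatTorus n) := by
    intro t
    have ht0 : (0:ℝ) ≤ (t:ℝ) := t.2.1
    have ht1 : (t:ℝ) ≤ 1 := t.2.2
    have key : ∀ j : ℕ,
        dist (γ t) (p + (((t:ℝ) • u : EuclideanSpace ℝ (Fin n)) : FlatTorus n))
          ≤ δ * (1/2)^j := by
      intro j
      have h2p : (0:ℝ) < (2:ℝ)^(j+1) := by positivity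
      set k : ℕ := (⌊(t:ℝ) * 2^(j+1)⌋).toNat with hkdef
      have hfl0 : (0:ℤ) ≤ ⌊(t:ℝ) * 2^(j+1)⌋ := Int.floor_nonneg.mpr (by positivity)
      have hkr : (k:ℝ) = (⌊(t:ℝ) * 2^(j+1)⌋ : ℝ) := by
        rw [hkdef]
        exact_mod_cast congrArg (Int.cast : ℤ → ℝ) (Int.toNat_of_nonneg hfl0)
      have hk_le : (k:ℝ) ≤ (t:ℝ) * 2^(j+1) := by rw [hkr]; exact Int.floor_le _
      have hk_gt : (t:ℝ) * 2^(j+1) < (k:ℝ) + 1 := by rw [hkr]; exact Int.lt_floor_add_one _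
      have hkN : k ≤ 2^(j+1) := by
        have h3 : (k:ℝ) ≤ (2:ℝ)^(j+1) := le_trans hk_le (by nlinarith)
        exact_mod_cast h3
      have hTj0 : (0:ℝ) ≤ (k:ℝ) / 2^(j+1) := by positivity
      have hTj1 : (k:ℝ) / 2^(j+1) ≤ 1 := by
        rw [div_le_one h2p]
        nlinarith
      set Tj : unitInterval := ⟨(k:ℝ) / 2^(j+1), hTj0, hTj1⟩ with hTjdef
      have hTjcoe : ((Tj : unitInterval) : ℝ) = (k:ℝ) / 2^(j+1) := rfl
      have hTj := main j k hkN Tj hTjcoe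
      have ha : (k:ℝ)/2^(j+1) ≤ (t:ℝ) := by
        rw [div_le_iff₀ h2p]
        exact hk_le
      have hb : (t:ℝ) ≤ ((k:ℝ) + 1)/2^(j+1) := by
        rw [le_div_iff₀ h2p]
        linarith
      have hsplit : ((k:ℝ)+1)/2^(j+1) = (k:ℝ)/2^(j+1) + 1/2^(j+1) := by ring
      have habs1 : |(t:ℝ) - (k:ℝ)/2^(j+1)| ≤ 1/2^(j+1) := by
        rw [abs_le]
        constructor <;> [skip; skip] <;> linarith
      have hd1 : dist (γ t) (γ Tj) ≤ δ * (1/2^(j+1)) := by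
        have h := hc t Tj
        rw [hcδ, hTjcoe] at h
        rw [h]
        exact mul_le_mul_of_nonneg_left habs1 hδ0
      have hd2 : dist (γ Tj)
          (p + (((t:ℝ) • u : EuclideanSpace ℝ (Fin n)) : FlatTorus n)) ≤ δ * (1/2^(j+1)) := by
        rw [hTj, hTjcoe]
        rw [gpath_dist hu_abs p ((k:ℝ)/2^(j+1)) (t:ℝ) ?hle]
        case hle =>
          rw [abs_sub_comm]
          refine le_trans habs1 ?_
          rw [div_le_one h2p]
          have : (1:ℝ) ≤ (2:ℝ)^(j+1) := one_le_pow₀ (by norm_num)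
          linarith
        rw [abs_sub_comm]
        exact mul_le_mul_of_nonneg_left habs1 hδ0
      calc dist (γ t) (p + (((t:ℝ) • u : EuclideanSpace ℝ (Fin n)) : FlatTorus n))
          ≤ dist (γ t) (γ Tj)
            + dist (γ Tj) (p + (((t:ℝ) • u : EuclideanSpace ℝ (Fin n)) : FlatTorus n)) :=
            dist_triangle _ _ _
        _ ≤ δ * (1/2^(j+1)) + δ * (1/2^(j+1)) := add_le_add hd1 hd2
        _ = δ * (1/2)^j := by
            rw [div_pow, one_pow]
            ring
    have hd0 : dist (γ t)
        (p + (((t:ℝ) • u : EuclideanSpace ℝ (Fin n)) : FlatTorus n)) ≤ 0 := by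
      by_contra hpos
      push_neg at hpos
      rcases eq_or_lt_of_le hδ0 with hδz | hδpos
      · have hthis := key 0
        rw [← hδz] at hthis
        norm_num at hthis
        rw [hthis, dist_self] at hpos
        exact lt_irrefl _ hpos
      · obtain ⟨j, hj⟩ := exists_pow_lt_of_lt_one (div_pos hpos hδpos)
          (by norm_num : (1:ℝ)/2 < 1)
        have h2 := key j
        have h3 : δ * (1/2)^j < δ * (dist (γ t)
            (p + (((t:ℝ) • u : EuclideanSpace ℝ (Fin n)) : FlatTorus n)) / δ) :=
          mul_lt_mul_of_pos_left hj hδpos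
        rw [mul_div_cancel₀ _ (ne_of_gt hδpos)] at h3
        exact absurd (lt_of_le_of_lt h2 h3) (lt_irrefl _)
    exact eq_of_dist_eq_zero (le_antisymm hd0 dist_nonneg)
  refine ⟨fun i => decide (0 < u i), ?_⟩
  have hu_eq : sgnVec n (fun i => decide (0 < u i)) = u := by
    ext i
    rcases (abs_eq (by norm_num : (0:ℝ) ≤ 1/2)).mp (hu_abs i) with h | h
    · rw [sgnVec_apply, h]
      norm_num
    · rw [sgnVec_apply, h]
      norm_num
  ext t
  rw [final t, gpath_apply, hu_eq]

end FT

/-- **Exactly `2ⁿ` geodesics join a point of the flat `n`-torus to its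
antipode.**  For `p ∈ Tⁿ` and `q = p + (1/2, …, 1/2)`, there are exactly `2ⁿ`
distinct geodesics from `p` to `q`. -/
theorem flatTorus_card_geodesics_to_antipode (n : ℕ) (p : FlatTorus n) :
    {γ : C(unitInterval, FlatTorus n) | IsGeodesic γ ∧ γ 0 = p ∧
      γ 1 = p + (QuotientAddGroup.mk (halfVec n) : FlatTorus n)}.ncard = 2 ^ n := by
  have hset : {γ : C(unitInterval, FlatTorus n) | IsGeodesic γ ∧ γ 0 = p ∧
      γ 1 = p + (QuotientAddGroup.mk (halfVec n) : FlatTorus n)}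
      = Set.range (fun ε : Fin n → Bool => FT.gpath p (FT.sgnVec n ε)) := by
    ext γ
    constructor
    · rintro ⟨hg, h0, h1⟩
      obtain ⟨ε, hε⟩ := FT.surj hg h0 h1
      exact ⟨ε, hε.symm⟩
    · rintro ⟨ε, rfl⟩
      exact FT.gpath_mem p ε
  rw [hset, ← Nat.card_coe_set_eq, Nat.card_range_of_injective (FT.gpath_inj p)]
  rw [Nat.card_eq_fintype_card, Fintype.card_fun]
  simp
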